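/- The tensor product of two CP-forms is a CP-form: given Kraus morphisms f : A → C ⊗ B and g : A' → C' ⊗ B', there exists a Kraus morphism h : A ⊗ A' → (C ⊗ C') ⊗ (B ⊗ B') such that the CP-form of h equals, up to symmetry and associativity coherence isomorphisms, the tensor (interleaved appropriately) of the CP-forms of f and g. Consequently CP(C) is a symmetric monoidal category. -/

import Mathlib

open CategoryTheory MonoidalCategory

universe v u

/-- A dagger structure on a category. -/
class Dagger (C : Type u) [Category.{v} C] where
  dag : ∀ {X Y : C}, (X ⟶ Y) → (Y ⟶ X)
  dag_dag : ∀ {X Y : C} (f : X ⟶ Y), dag (dag f) = f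
  dag_id : ∀ X : C, dag (𝟙 X) = 𝟙 X
  dag_comp : ∀ {X Y Z : C} (f : X ⟶ Y) (g : Y ⟶ Z), dag (f ≫ g) = dag g ≫ dag f

open Dagger

/-- A dagger symmetric monoidal category. -/
class DaggerSMC (C : Type u) [Category.{v} C] [MonoidalCategory C] [SymmetricCategory C]
    extends Dagger C where
  dag_tensor : ∀ {X Y X' Y' : C} (f : X ⟶ Y) (g : X' ⟶ Y'), dag (f ⊗ₘ g) = dag f ⊗ₘ dag g
  dag_assoc : ∀ X Y Z : C, dag (α_ X Y Z).hom = (α_ X Y Z).inv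
  dag_left : ∀ X : C, dag (λ_ X).hom = (λ_ X).inv
  dag_right : ∀ X : C, dag (ρ_ X).hom = (ρ_ X).inv
  dag_braid : ∀ X Y : C, dag (β_ X Y).hom = (β_ X Y).inv

variable {C : Type u} [Category.{v} C] [MonoidalCategory C] [SymmetricCategory C] [DaggerSMC C]

/-- The CP-form `(f† ⊗ id)(id ⊗ σ)(f ⊗ id)` of a Kraus morphism `f : A ⟶ X ⊗ B`
(ancillary system `X`), written with coherence isomorphisms inserted. -/
def CPform {A B X : C} (f : A ⟶ X ⊗ B) : A ⊗ B ⟶ A ⊗ B :=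
  (f ▷ B) ≫ (α_ X B B).hom ≫ (X ◁ (β_ B B).hom) ≫ (α_ X B B).inv ≫ (dag f ▷ B)

/-- The composition in `CP(C)` of the CP-form of `f : A ⟶ X ⊗ B` with the CP-form of
`g : B ⟶ D ⊗ E`, given by the composition diagram of the CP-construction. -/
def CPcomp {A B X D E : C} (f : A ⟶ X ⊗ B) (g : B ⟶ D ⊗ E) : A ⊗ E ⟶ A ⊗ E :=
  (f ▷ E) ≫ (α_ X B E).hom ≫ (X ◁ (g ▷ E)) ≫ (X ◁ (α_ D E E).hom) ≫
    (X ◁ (D ◁ (β_ E E).hom)) ≫ (X ◁ (α_ D E E).inv) ≫ (X ◁ (dag g ▷ E)) ≫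
    (α_ X B E).inv ≫ (dag f ▷ E)


section Helpers

set_option linter.unusedSectionVars false

theorem tensorμ_braiding' (X₁ X₂ Y₁ Y₂ : C) :
    (β_ (X₁ ⊗ X₂) (Y₁ ⊗ Y₂)).hom ≫ tensorμ Y₁ Y₂ X₁ X₂ =
      tensorμ X₁ X₂ Y₁ Y₂ ≫ ((β_ X₁ Y₁).hom ⊗ₘ (β_ X₂ Y₂).hom) := by
  simp only [tensorμ, Category.assoc, BraidedCategory.braiding_naturality,
    BraidedCategory.braiding_tensor_right_hom, BraidedCategory.braiding_tensor_left_hom,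
    comp_whiskerRight, whisker_assoc, MonoidalCategory.whiskerLeft_comp, pentagon_assoc,
    pentagon_inv_hom_hom_hom_inv_assoc, Iso.inv_hom_id_assoc, whiskerLeft_hom_inv_assoc]
  slice_lhs 11 12 =>
    rw [← MonoidalCategory.whiskerLeft_comp, ← comp_whiskerRight, SymmetricCategory.symmetry]
  simp only [id_whiskerRight, MonoidalCategory.whiskerLeft_id, Category.id_comp, Category.assoc]
  rw [MonoidalCategory.tensorHom_def]
  monoidal

theorem tensorδ_eq (X₁ X₂ Y₁ Y₂ : C) : tensorδ X₁ X₂ Y₁ Y₂ = tensorμ X₁ Y₁ X₂ Y₂ := by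
  simp only [tensorδ, tensorμ, ← SymmetricCategory.braiding_swap_eq_inv_braiding]

/-- `mid X B` swaps the two rightmost `B` factors. -/
def mid (X B : C) : (X ⊗ B) ⊗ B ⟶ (X ⊗ B) ⊗ B :=
  (α_ X B B).hom ≫ (X ◁ (β_ B B).hom) ≫ (α_ X B B).inv

theorem keyGen (X X' B B' : C) :
    (tensorμ X X' B B' ▷ (B ⊗ B')) ≫ tensorμ (X ⊗ B) (X' ⊗ B') B B' ≫ (mid X B ⊗ₘ mid X' B')
      = mid (X ⊗ X') (B ⊗ B') ≫
        (tensorμ X X' B B' ▷ (B ⊗ B')) ≫ tensorμ (X ⊗ B) (X' ⊗ B') B B' := by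
  have TA := tensor_associativity (C := C) X X' B B' B B'
  have TA' : ((X ⊗ X') ◁ tensorμ B B' B B') ≫ tensorμ X X' (B ⊗ B) (B' ⊗ B')
      = (α_ (X ⊗ X') (B ⊗ B') (B ⊗ B')).inv ≫ (tensorμ X X' B B' ▷ (B ⊗ B')) ≫
          tensorμ (X ⊗ B) (X' ⊗ B') B B' ≫ ((α_ X B B).hom ⊗ₘ (α_ X' B' B').hom) := by
    rw [TA, Iso.inv_hom_id_assoc]
  have hmid : (mid X B ⊗ₘ mid X' B') =
      ((α_ X B B).hom ⊗ₘ (α_ X' B' B').hom) ≫ ((X ◁ (β_ B B).hom) ⊗ₘ (X' ◁ (β_ B' B').hom)) ≫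
        ((α_ X B B).inv ⊗ₘ (α_ X' B' B').inv) := by
    simp [mid]
  rw [hmid]
  slice_lhs 1 3 => rw [TA]
  simp only [Category.assoc]
  slice_lhs 3 4 => rw [← tensorμ_natural_right]
  slice_lhs 2 3 => rw [← MonoidalCategory.whiskerLeft_comp, ← tensorμ_braiding',
    MonoidalCategory.whiskerLeft_comp]
  simp only [Category.assoc]
  slice_lhs 3 4 => rw [TA']
  simp only [Category.assoc, mid, tensorHom_comp_tensorHom, Iso.hom_inv_id, id_tensorHom_id, Category.comp_id]

theorem dag_whiskerLeft' (X : C) {Y Z : C} (f : Y ⟶ Z) : dag (X ◁ f) = X ◁ dag f := by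
  rw [← id_tensorHom, DaggerSMC.dag_tensor, dag_id, id_tensorHom]

theorem dag_whiskerRight' {Y Z : C} (f : Y ⟶ Z) (X : C) : dag (f ▷ X) = dag f ▷ X := by
  rw [← tensorHom_id, DaggerSMC.dag_tensor, dag_id, tensorHom_id]

theorem dag_assoc_inv (X Y Z : C) : dag (α_ X Y Z).inv = (α_ X Y Z).hom := by
  rw [← DaggerSMC.dag_assoc, dag_dag]

theorem dag_braid_inv (X Y : C) : dag (β_ X Y).inv = (β_ X Y).hom := by
  rw [← DaggerSMC.dag_braid, dag_dag]

theorem dag_tensorμ (X₁ X₂ Y₁ Y₂ : C) :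
    dag (tensorμ X₁ X₂ Y₁ Y₂) = tensorδ X₁ X₂ Y₁ Y₂ := by
  simp [tensorμ, tensorδ, dag_comp, dag_whiskerLeft', dag_whiskerRight',
    DaggerSMC.dag_assoc, dag_assoc_inv, DaggerSMC.dag_braid]

end Helpers

/-- The tensor product of two CP-forms is again a CP-form: there is a Kraus morphism
`h : A ⊗ A' ⟶ (X ⊗ X') ⊗ (B ⊗ B')` whose CP-form equals the interleaved tensor
`CPform f ⊗ CPform g`, up to the symmetry/associativity interchange `tensorμ`.
(This is the key step showing `CP(C)` is a symmetric monoidal category.) -/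
theorem cp_tensor_is_cp_form {A B X A' B' X' : C} (f : A ⟶ X ⊗ B) (g : A' ⟶ X' ⊗ B') :
    ∃ h : A ⊗ A' ⟶ (X ⊗ X') ⊗ (B ⊗ B'),
      (CPform f ⊗ₘ CPform g) ≫ tensorμ A B A' B' = tensorμ A B A' B' ≫ CPform h := by
  refine ⟨(f ⊗ₘ g) ≫ tensorμ X B X' B', ?_⟩
  have hdag : dag ((f ⊗ₘ g) ≫ tensorμ X B X' B') =
      tensorδ X B X' B' ≫ (dag f ⊗ₘ dag g) := by
    rw [dag_comp, dag_tensorμ, DaggerSMC.dag_tensor]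
  have hsplit : (CPform f ⊗ₘ CPform g) =
      ((f ▷ B) ⊗ₘ (g ▷ B')) ≫ (mid X B ⊗ₘ mid X' B') ≫ ((dag f ▷ B) ⊗ₘ (dag g ▷ B')) := by
    simp [CPform, mid]
  have nat1 : ((dag f ▷ B) ⊗ₘ (dag g ▷ B')) ≫ tensorμ A B A' B' =
      tensorμ (X ⊗ B) B (X' ⊗ B') B' ≫ ((dag f ⊗ₘ dag g) ▷ (B ⊗ B')) := by
    have := tensorμ_natural (dag f) (𝟙 B) (dag g) (𝟙 B')
    simpa using this
  have nat2 : tensorμ A B A' B' ≫ ((f ⊗ₘ g) ▷ (B ⊗ B')) =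
      ((f ▷ B) ⊗ₘ (g ▷ B')) ≫ tensorμ (X ⊗ B) B (X' ⊗ B') B' := by
    have := tensorμ_natural f (𝟙 B) g (𝟙 B')
    simpa using this.symm
  have e1 : tensorμ (X ⊗ B) B (X' ⊗ B') B' = tensorδ (X ⊗ B) (X' ⊗ B') B B' :=
    (tensorδ_eq _ _ _ _).symm
  have e2 : tensorμ X B X' B' = tensorδ X X' B B' := (tensorδ_eq _ _ _ _).symm
  have e3 : tensorδ X B X' B' = tensorμ X X' B B' := tensorδ_eq _ _ _ _
  haveI i1 : IsIso (tensorμ (X ⊗ B) (X' ⊗ B') B B') :=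
    ⟨tensorδ _ _ _ _, tensorμ_tensorδ _ _ _ _, tensorδ_tensorμ _ _ _ _⟩
  haveI i2 : IsIso (tensorμ X X' B B') :=
    ⟨tensorδ _ _ _ _, tensorμ_tensorδ _ _ _ _, tensorδ_tensorμ _ _ _ _⟩
  haveI i3 : IsIso (tensorμ X X' B B' ▷ (B ⊗ B')) := by
    exact ⟨tensorδ X X' B B' ▷ (B ⊗ B'), by
        rw [← comp_whiskerRight, tensorμ_tensorδ]; simp, by
        rw [← comp_whiskerRight, tensorδ_tensorμ]; simp⟩
  have key : (mid X B ⊗ₘ mid X' B') ≫ tensorδ (X ⊗ B) (X' ⊗ B') B B' =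
      tensorδ (X ⊗ B) (X' ⊗ B') B B' ≫ (tensorδ X X' B B' ▷ (B ⊗ B')) ≫
        mid (X ⊗ X') (B ⊗ B') ≫ (tensorμ X X' B B' ▷ (B ⊗ B')) := by
    rw [← cancel_epi (tensorμ (X ⊗ B) (X' ⊗ B') B B'),
      ← cancel_epi (tensorμ X X' B B' ▷ (B ⊗ B'))]
    calc (tensorμ X X' B B' ▷ (B ⊗ B')) ≫ tensorμ (X ⊗ B) (X' ⊗ B') B B' ≫
          (mid X B ⊗ₘ mid X' B') ≫ tensorδ (X ⊗ B) (X' ⊗ B') B B'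
        = ((tensorμ X X' B B' ▷ (B ⊗ B')) ≫ tensorμ (X ⊗ B) (X' ⊗ B') B B' ≫
            (mid X B ⊗ₘ mid X' B')) ≫ tensorδ (X ⊗ B) (X' ⊗ B') B B' := by
          simp only [Category.assoc]
      _ = (mid (X ⊗ X') (B ⊗ B') ≫ (tensorμ X X' B B' ▷ (B ⊗ B')) ≫
            tensorμ (X ⊗ B) (X' ⊗ B') B B') ≫ tensorδ (X ⊗ B) (X' ⊗ B') B B' := by
          rw [keyGen]
      _ = mid (X ⊗ X') (B ⊗ B') ≫ (tensorμ X X' B B' ▷ (B ⊗ B')) := by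
          simp only [Category.assoc, tensorμ_tensorδ, Category.comp_id]
      _ = _ := by
          rw [tensorμ_tensorδ_assoc, ← comp_whiskerRight_assoc, tensorμ_tensorδ,
            id_whiskerRight, Category.id_comp]
  -- assemble
  rw [hsplit, CPform, hdag]
  simp only [comp_whiskerRight, Category.assoc]
  slice_lhs 3 4 => rw [nat1]
  slice_rhs 1 2 => rw [nat2]
  rw [e1, e2, e3]
  slice_lhs 2 3 => rw [key]
  simp only [mid, Category.assoc]
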